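/- Let (X,d) be a complete separable metric space, N ≥ 1, and let T : X × ℝ^N → X be a continuous ℝ^N-action which is transitive, i.e. for some (equivalently, any) x̄ ∈ X and every x ∈ X there exists a ∈ ℝ^N with T(x̄,a) = x. Suppose there exists a nonzero finite Borel measure m on X such that (T(·,a))_*m = m for every a ∈ ℝ^N. Then the stabilizer G of x̄ spans ℝ^N as a real vector space. -/

import Mathlib

open MeasureTheory

/-- For a continuous transitive `ℝ^N`-action on a complete separable metric space
admitting a nonzero finite invariant Borel measure, the stabilizer of a point spans
`ℝ^N` as a real vector space. -/
theorem stmt_5 {X : Type*} [MetricSpace X] [CompleteSpace X]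
    [TopologicalSpace.SeparableSpace X] [MeasurableSpace X] [BorelSpace X]
    (N : ℕ) (hN : 1 ≤ N)
    (T : X → EuclideanSpace ℝ (Fin N) → X)
    (hT0 : ∀ x, T x 0 = x)
    (hTadd : ∀ (x : X) (a b : EuclideanSpace ℝ (Fin N)), T (T x a) b = T x (a + b))
    (hcont : Continuous (fun p : X × EuclideanSpace ℝ (Fin N) => T p.1 p.2))
    (x₀ : X) (htrans : ∀ x : X, ∃ a : EuclideanSpace ℝ (Fin N), T x₀ a = x)
    (m : Measure X) (hm0 : m ≠ 0) [IsFiniteMeasure m]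
    (hinv : ∀ a : EuclideanSpace ℝ (Fin N), m.map (fun x => T x a) = m) :
    Submodule.span ℝ {g : EuclideanSpace ℝ (Fin N) | T x₀ g = x₀} = ⊤ := by
  haveI : SecondCountableTopology X :=
    UniformSpace.secondCountable_of_separable X
  by_contra hspan
  set G : Set (EuclideanSpace ℝ (Fin N)) := {g : EuclideanSpace ℝ (Fin N) | T x₀ g = x₀}
    with hGdef
  -- a nonzero functional vanishing on the span of G
  obtain ⟨f, hf0, hfker⟩ :=
    Submodule.exists_dual_map_eq_bot_of_lt_top
      (p := Submodule.span ℝ G) (lt_top_iff_ne_top.2 hspan) inferInstance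
  have hfG : ∀ g ∈ G, f g = 0 := by
    intro g hg
    have : f g ∈ Submodule.map f (Submodule.span ℝ G) :=
      Submodule.mem_map_of_mem (Submodule.subset_span hg)
    rwa [hfker, Submodule.mem_bot] at this
  -- a vector with f v = 1
  obtain ⟨w, hw⟩ : ∃ w : EuclideanSpace ℝ (Fin N), f w ≠ 0 := by
    by_contra h
    push_neg at h
    exact hf0 (LinearMap.ext fun x => by simp [h x])
  set v : EuclideanSpace ℝ (Fin N) := (f w)⁻¹ • w with hvdef
  have hfv : f v = 1 := by
    simp only [hvdef, LinearMap.map_smul, smul_eq_mul]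
    exact inv_mul_cancel₀ hw
  -- f descends to the orbit
  have hdesc : ∀ a b : EuclideanSpace ℝ (Fin N), T x₀ a = T x₀ b → f a = f b := by
    intro a b hab
    have h1 : T x₀ (b + (-a)) = x₀ := by
      rw [← hTadd, ← hab, hTadd, add_neg_cancel, hT0]
    have := hfG _ h1
    have h2 : f b - f a = 0 := by
      simpa [map_add, map_neg, sub_eq_add_neg] using this
    linarith [sub_eq_zero.mp h2]
  set φ : EuclideanSpace ℝ (Fin N) → X := fun a => T x₀ a with hφdef
  have hφcont : Continuous φ := by
    have h : φ = (fun p : X × EuclideanSpace ℝ (Fin N) => T p.1 p.2) ∘ (fun a => (x₀, a)) := rfl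
    rw [h]
    exact hcont.comp ((continuous_const : Continuous fun _ : EuclideanSpace ℝ (Fin N) => x₀).prodMk
      continuous_id)
  set B : ℤ → Set X := fun n => φ '' (f ⁻¹' Set.Ico (n : ℝ) ((n : ℝ) + 1)) with hBdef
  -- each point lies in exactly one B n
  have hmemB : ∀ (n : ℤ) (x : X), x ∈ B n ↔ ∃ a : EuclideanSpace ℝ (Fin N),
      φ a = x ∧ ⌊f a⌋ = n := by
    intro n x
    constructor
    · rintro ⟨a, ha, rfl⟩
      exact ⟨a, rfl, Int.floor_eq_iff.2 ⟨ha.1, ha.2⟩⟩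
    · rintro ⟨a, rfl, hn⟩
      exact ⟨a, ⟨by rw [← hn]; exact Int.floor_le _,
        by rw [← hn]; exact Int.lt_floor_add_one _⟩, rfl⟩
  have hcover : ∀ x : X, ∃ n : ℤ, x ∈ B n := by
    intro x
    obtain ⟨a, ha⟩ := htrans x
    exact ⟨⌊f a⌋, (hmemB _ _).2 ⟨a, ha, rfl⟩⟩
  have hUnion : ⋃ n : ℤ, B n = Set.univ := by
    ext x; simpa using hcover x
  have hdisj : Pairwise (Function.onFun Disjoint B) := by
    intro n k hnk
    simp only [Function.onFun]
    rw [Set.disjoint_left]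
    intro x hxn hxk
    obtain ⟨a, ha, hna⟩ := (hmemB n x).1 hxn
    obtain ⟨b, hb, hkb⟩ := (hmemB k x).1 hxk
    have : f a = f b := hdesc a b (by rw [show T x₀ a = φ a from rfl,
      show T x₀ b = φ b from rfl, ha, hb])
    exact hnk (by rw [← hna, ← hkb, this])
  -- measurability of B n via Suslin's theorem
  have hanalytic : ∀ n : ℤ, AnalyticSet (B n) := by
    intro n
    exact ((f.continuous_of_finiteDimensional.measurable)
      measurableSet_Ico).analyticSet_image hφcont.measurable
  have hcomplB : ∀ n : ℤ, (B n)ᶜ = ⋃ k : {k : ℤ // k ≠ n}, B k := by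
    intro n
    ext x
    simp only [Set.mem_compl_iff, Set.mem_iUnion]
    constructor
    · intro hx
      obtain ⟨k, hk⟩ := hcover x
      have hkn : k ≠ n := by rintro rfl; exact hx hk
      exact ⟨⟨k, hkn⟩, hk⟩
    · rintro ⟨⟨k, hkn⟩, hk⟩ hx
      exact hkn ((hdisj.eq (Set.not_disjoint_iff.2 ⟨x, hk, hx⟩)))
  have hmeas : ∀ n : ℤ, MeasurableSet (B n) := by
    intro n
    refine (hanalytic n).measurableSet_of_compl ?_
    rw [hcomplB n]
    exact AnalyticSet.iUnion fun k => hanalytic k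
  -- translation by v shifts B n to B (n+1)
  have hpre : ∀ n : ℤ, (fun x => T x v) ⁻¹' B (n + 1) = B n := by
    intro n
    ext x
    simp only [Set.mem_preimage]
    constructor
    · intro hx
      obtain ⟨a, ha⟩ := htrans x
      obtain ⟨c, hc, hnc⟩ := (hmemB _ _).1 hx
      have hφav : φ (a + v) = T x v := by
        show T x₀ (a + v) = T x v
        rw [← hTadd, ha]
      have hfc : f (a + v) = f c := hdesc _ _ (by
        show T x₀ (a + v) = T x₀ c
        rw [show T x₀ (a + v) = φ (a + v) from rfl, hφav, ← hc])
      refine (hmemB n x).2 ⟨a, ha, ?_⟩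
      have hfa : f a = f c - 1 := by
        simp only [map_add, hfv] at hfc; linarith
      rw [hfa]
      have h1 : ((n : ℝ) + 1) ≤ f c := by
        have := Int.floor_le (f c); rw [hnc] at this; push_cast at this; linarith
      have h2 : f c < (n : ℝ) + 1 + 1 := by
        have := Int.lt_floor_add_one (f c); rw [hnc] at this; push_cast at this; linarith
      exact Int.floor_eq_iff.2 ⟨by push_cast; linarith, by push_cast; linarith⟩
    · intro hx
      obtain ⟨a, ha, hna⟩ := (hmemB n x).1 hx
      refine (hmemB (n + 1) (T x v)).2 ⟨a + v, ?_, ?_⟩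
      · show T x₀ (a + v) = T x v
        rw [← hTadd]
        exact congrArg (fun y => T y v) ha
      · have h1 : (n : ℝ) ≤ f a := by
          have := Int.floor_le (f a); rw [hna] at this; exact this
        have h2 : f a < (n : ℝ) + 1 := by
          have := Int.lt_floor_add_one (f a); rw [hna] at this; exact this
        have hfa : f (a + v) = f a + 1 := by simp [map_add, hfv]
        rw [hfa]
        refine Int.floor_eq_iff.2 ⟨?_, ?_⟩ <;> push_cast <;> linarith
  have hmeasmap : Measurable (fun x => T x v) := by
    have h : (fun x => T x v) =
        (fun p : X × EuclideanSpace ℝ (Fin N) => T p.1 p.2) ∘ (fun x => (x, v)) := rfl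
    rw [h]
    exact (hcont.comp (continuous_id.prodMk
      (continuous_const : Continuous fun _ : X => v))).measurable
  have hstep : ∀ n : ℤ, m (B (n + 1)) = m (B n) := by
    intro n
    conv_lhs => rw [← hinv v]
    rw [Measure.map_apply hmeasmap (hmeas (n + 1)), hpre]
  have hconst : ∀ n : ℤ, m (B n) = m (B 0) := by
    intro n
    induction n using Int.induction_on with
    | zero => rfl
    | succ k ih => rw [hstep k, ih]
    | pred k ih => rw [← ih, ← hstep (-k - 1)]; norm_num
  have htot : m Set.univ = ∑' n : ℤ, m (B n) := by
    rw [← hUnion, measure_iUnion hdisj hmeas]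
  have hB0 : m (B 0) = 0 := by
    by_contra h
    have h1 : (∑' _ : ℤ, m (B 0)) = ⊤ := ENNReal.tsum_const_eq_top_of_ne_zero h
    have h2 : m Set.univ = ⊤ := by
      rw [htot]; simpa only [hconst] using h1
    exact (measure_ne_top m Set.univ) h2
  have hz : m Set.univ = 0 := by
    rw [htot]
    simp [hconst, hB0]
  exact hm0 (Measure.measure_univ_eq_zero.mp hz)
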